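/- Suppose (f_n)_{n≥1} is a sequence of polynomials with non-negative coefficients satisfying f_n = x(f_{n−1} + f_{n−2} + f_{n−3}) for all n ≥ 4. If for each i ∈ {1,2,3,4}, f_i is unimodal with a mode at μ_i and 0 ≤ μ_i − μ_{i−1} ≤ 1 for i ∈ {2,3,4}, then for all n ≥ 1, f_n is unimodal with a mode μ_n satisfying 0 ≤ μ_n − μ_{n−1} ≤ 1 for n ≥ 2. -/
import Mathlib

open Polynomial

/-- A real polynomial is unimodal with a mode at `k`: its coefficient sequence is
non-decreasing up to index `k` and non-increasing from index `k` on. -/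
def UnimodalWithModeR (p : Polynomial ℝ) (k : ℕ) : Prop :=
  (∀ i < k, p.coeff i ≤ p.coeff (i + 1)) ∧ (∀ i, k ≤ i → p.coeff (i + 1) ≤ p.coeff i)

private lemma unimodal_shift_up {g : ℝ[X]} {m : ℕ} (hg : UnimodalWithModeR g m)
    (h0 : 0 ≤ g.coeff 0) : UnimodalWithModeR (X * g) (m + 1) := by
  refine ⟨?_, ?_⟩
  · intro i hi
    cases i with
    | zero =>
      rw [coeff_X_mul]
      rw [Polynomial.mul_coeff_zero, Polynomial.coeff_X_zero, zero_mul]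
      exact h0
    | succ j =>
      rw [coeff_X_mul, coeff_X_mul]
      exact hg.1 j (by omega)
  · intro i hi
    obtain ⟨j, rfl⟩ : ∃ j, i = j + 1 := ⟨i - 1, by omega⟩
    rw [coeff_X_mul, coeff_X_mul]
    exact hg.2 j (by omega)

private lemma unimodal_shift_down {g : ℝ[X]} {k : ℕ} (h : UnimodalWithModeR (X * g) k) :
    UnimodalWithModeR g (k - 1) := by
  refine ⟨?_, ?_⟩
  · intro i hi
    have h2 := h.1 (i + 1) (by omega)
    rwa [coeff_X_mul, coeff_X_mul] at h2
  · intro i hi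
    have h2 := h.2 (i + 1) (by omega)
    rwa [coeff_X_mul, coeff_X_mul] at h2

private lemma unimodal_core {b c e h : ℝ[X]} {α β γ δ : ℕ}
    (hh : UnimodalWithModeR h (α - 1)) (hα : 1 ≤ α)
    (hb : UnimodalWithModeR b β) (hc : UnimodalWithModeR c γ)
    (he : UnimodalWithModeR e δ)
    (hhd : ∀ j, h.coeff j = b.coeff j + c.coeff j + e.coeff j)
    (hdg : δ ≤ γ) (hgb : γ ≤ β) (hba : β ≤ α)
    (hposh : ∀ j, 0 ≤ h.coeff j) :
    (∀ j, j + 1 < α → (X * h + b + c).coeff j ≤ (X * h + b + c).coeff (j + 1)) ∧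
    (∀ j, α ≤ j → (X * h + b + c).coeff (j + 1) ≤ (X * h + b + c).coeff j) := by
  constructor
  · intro j hj
    have hA : (X * h).coeff j ≤ (X * h).coeff (j + 1) := by
      cases j with
      | zero =>
        rw [coeff_X_mul, Polynomial.mul_coeff_zero, Polynomial.coeff_X_zero, zero_mul]
        exact hposh 0
      | succ i =>
        rw [coeff_X_mul, coeff_X_mul]
        exact hh.1 i (by omega)
    have hBC : b.coeff j + c.coeff j ≤ b.coeff (j + 1) + c.coeff (j + 1) := by
      by_cases hd : j < δ
      · have h1 := hb.1 j (by omega)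
        have h2 := hc.1 j (by omega)
        linarith
      · have h1 : h.coeff j ≤ h.coeff (j + 1) := hh.1 j (by omega)
        have h2 : e.coeff (j + 1) ≤ e.coeff j := he.2 j (by omega)
        have h3 := hhd j
        have h4 := hhd (j + 1)
        linarith
    simp only [coeff_add]
    linarith
  · intro j hj
    obtain ⟨i, rfl⟩ : ∃ i, j = i + 1 := ⟨j - 1, by omega⟩
    have hA : (X * h).coeff (i + 1 + 1) ≤ (X * h).coeff (i + 1) := by
      rw [coeff_X_mul, coeff_X_mul]
      exact hh.2 i (by omega)
    have hB := hb.2 (i + 1) (by omega)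
    have hC := hc.2 (i + 1) (by omega)
    simp only [coeff_add]
    linarith

theorem unimodal_poly_recursion (f : ℕ → Polynomial ℝ)
    (hpos : ∀ n, 1 ≤ n → ∀ k, 0 ≤ (f n).coeff k)
    (hrec : ∀ n, 4 ≤ n → f n = X * (f (n - 1) + f (n - 2) + f (n - 3)))
    (μ : ℕ → ℕ)
    (hmode : ∀ i, 1 ≤ i → i ≤ 4 → UnimodalWithModeR (f i) (μ i))
    (hdiff : ∀ i, 2 ≤ i → i ≤ 4 → μ (i - 1) ≤ μ i ∧ μ i ≤ μ (i - 1) + 1) :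
    ∃ ν : ℕ → ℕ, (∀ n, 1 ≤ n → UnimodalWithModeR (f n) (ν n)) ∧
      ∀ n, 2 ≤ n → ν (n - 1) ≤ ν n ∧ ν n ≤ ν (n - 1) + 1 := by
  classical
  let A : ℕ → ℕ := fun k => Nat.rec (motive := fun _ => ℕ) (max (μ 4) 1)
    (fun k α =>
      if (f (k + 4) + f (k + 3) + f (k + 2)).coeff (α - 1) ≤
          (f (k + 4) + f (k + 3) + f (k + 2)).coeff α
      then α + 1 else α) k
  have hA0 : A 0 = max (μ 4) 1 := rfl
  have hAs : ∀ k, A (k + 1) =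
      if (f (k + 4) + f (k + 3) + f (k + 2)).coeff (A k - 1) ≤
          (f (k + 4) + f (k + 3) + f (k + 2)).coeff (A k)
      then A k + 1 else A k := fun _ => rfl
  clear_value A
  have hstep : ∀ k, A k ≤ A (k + 1) ∧ A (k + 1) ≤ A k + 1 := by
    intro k
    rw [hAs k]
    split_ifs <;> omega
  -- the recursion in convenient form
  have hreck : ∀ k, f (k + 4) = X * (f (k + 3) + f (k + 2) + f (k + 1)) := by
    intro k
    have h := hrec (k + 4) (by omega)
    have e1 : k + 4 - 1 = k + 3 := by omega
    have e2 : k + 4 - 2 = k + 2 := by omega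
    have e3 : k + 4 - 3 = k + 1 := by omega
    rw [e1, e2, e3] at h
    exact h
  have key : ∀ k, 1 ≤ A k ∧ UnimodalWithModeR (f (k + 4)) (A k) ∧
      UnimodalWithModeR (f (k + 3) + f (k + 2) + f (k + 1)) (A k - 1) ∧
      ∃ d g b : ℕ, UnimodalWithModeR (f (k + 1)) d ∧ UnimodalWithModeR (f (k + 2)) g ∧
        UnimodalWithModeR (f (k + 3)) b ∧ d ≤ g ∧ g ≤ b ∧ b ≤ A k := by
    intro k
    induction k with
    | zero =>
      rw [hA0]
      have hm4 := hmode 4 (by norm_num) le_rfl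
      have hrec4 := hreck 0
      have hf4 : UnimodalWithModeR (f 4) (max (μ 4) 1) := by
        rcases Nat.eq_zero_or_pos (μ 4) with h0 | h1
        · have hmax : max (μ 4) 1 = 1 := by rw [h0]; simp
          rw [hmax]
          refine ⟨?_, ?_⟩
          · intro i hi
            obtain rfl : i = 0 := by omega
            have hz : (f 4).coeff 0 = 0 := by
              rw [hrec4, Polynomial.mul_coeff_zero, Polynomial.coeff_X_zero, zero_mul]
            rw [hz]
            exact hpos 4 (by norm_num) 1
          · intro i hi
            exact hm4.2 i (by omega)
        · rw [max_eq_left h1]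
          exact hm4
      refine ⟨le_max_right _ _, hf4, ?_, μ 1, μ 2, μ 3,
        hmode 1 le_rfl (by norm_num), hmode 2 (by norm_num) (by norm_num),
        hmode 3 (by norm_num) (by norm_num),
        (hdiff 2 (by norm_num) (by norm_num)).1, (hdiff 3 (by norm_num) (by norm_num)).1,
        le_trans (hdiff 4 (by norm_num) le_rfl).1 (le_max_left _ _)⟩
      · rw [hrec4] at hf4
        exact unimodal_shift_down hf4
    | succ k ih =>
      obtain ⟨hA1, hfa, hhuni, d, g0, b0, hed, hcg, hbb, hdg, hgb, hba⟩ := ih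
      have hposh : ∀ j, 0 ≤ (f (k + 3) + f (k + 2) + f (k + 1)).coeff j := by
        intro j
        simp only [coeff_add]
        have p1 := hpos (k + 3) (by omega) j
        have p2 := hpos (k + 2) (by omega) j
        have p3 := hpos (k + 1) (by omega) j
        linarith
      have hcore := unimodal_core hhuni hA1 hbb hcg hed
        (fun j => by simp only [coeff_add]) hdg hgb hba hposh
      obtain ⟨hi, hii⟩ := hcore
      rw [← hreck k] at hi hii
      -- hi, hii about (f (k+4) + f (k+3) + f (k+2))
      have hm : UnimodalWithModeR (f (k + 4) + f (k + 3) + f (k + 2)) (A (k + 1) - 1) := by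
        rw [hAs k]
        by_cases hcond : (f (k + 4) + f (k + 3) + f (k + 2)).coeff (A k - 1) ≤
            (f (k + 4) + f (k + 3) + f (k + 2)).coeff (A k)
        · rw [if_pos hcond]
          have e : A k + 1 - 1 = A k := by omega
          rw [e]
          refine ⟨?_, ?_⟩
          · intro i hlt
            by_cases h2 : i + 1 < A k
            · exact hi i h2
            · obtain rfl : i = A k - 1 := by omega
              have e2 : A k - 1 + 1 = A k := by omega
              rw [e2]
              exact hcond
          · exact hii
        · rw [if_neg hcond]
          refine ⟨?_, ?_⟩
          · intro i hlt
            exact hi i (by omega)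
          · intro i hle
            by_cases h2 : A k ≤ i
            · exact hii i h2
            · obtain rfl : i = A k - 1 := by omega
              have e2 : A k - 1 + 1 = A k := by omega
              rw [e2]
              exact le_of_not_ge hcond
      have hk1 := hstep k
      have hA1' : 1 ≤ A (k + 1) := by omega
      have hposG : 0 ≤ (f (k + 4) + f (k + 3) + f (k + 2)).coeff 0 := by
        simp only [coeff_add]
        have p1 := hpos (k + 4) (by omega) 0
        have p2 := hpos (k + 3) (by omega) 0
        have p3 := hpos (k + 2) (by omega) 0
        linarith
      have hfnew : UnimodalWithModeR (f (k + 5)) (A (k + 1)) := by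
        have hr : f (k + 5) = X * (f (k + 4) + f (k + 3) + f (k + 2)) := hreck (k + 1)
        rw [hr]
        have e : A (k + 1) = (A (k + 1) - 1) + 1 := by omega
        rw [e]
        exact unimodal_shift_up hm hposG
      exact ⟨hA1', hfnew, hm, g0, b0, A k, hcg, hbb, hfa, hgb, hba, hk1.1⟩
  refine ⟨fun n => if n ≤ 3 then μ n else A (n - 4), ?_, ?_⟩
  · intro n hn
    dsimp only
    by_cases h3 : n ≤ 3
    · rw [if_pos h3]
      exact hmode n hn (by omega)
    · rw [if_neg h3]
      have hk := (key (n - 4)).2.1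
      have e : n - 4 + 4 = n := by omega
      rwa [e] at hk
  · intro n hn
    dsimp only
    rcases lt_or_ge n 5 with h5 | h5
    · interval_cases n
      · -- n = 2
        norm_num
        exact ⟨(hdiff 2 (by norm_num) (by norm_num)).1, (hdiff 2 (by norm_num) (by norm_num)).2⟩
      · -- n = 3
        norm_num
        exact ⟨(hdiff 3 (by norm_num) (by norm_num)).1, (hdiff 3 (by norm_num) (by norm_num)).2⟩
      · -- n = 4
        norm_num
        rw [hA0]
        constructor
        · exact le_trans (hdiff 4 (by norm_num) le_rfl).1 (le_max_left _ _)
        · exact max_le (hdiff 4 (by norm_num) le_rfl).2 (by omega)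
    · have e1 : ¬ n ≤ 3 := by omega
      have e2 : ¬ n - 1 ≤ 3 := by omega
      rw [if_neg e1, if_neg e2]
      have e3 : n - 4 = (n - 1 - 4) + 1 := by omega
      rw [e3]
      exact ⟨(hstep (n - 1 - 4)).1, (hstep (n - 1 - 4)).2⟩
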